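/- arXiv:1910.02205 — 2 statements merged into one kernel-verified Lean document; each statement's English description precedes it below -/
import Mathlib

section
/- Let (X,d) be a metric space and let U be a subset of F_USCG(X). Then U is relatively compact in (F_USCG(X), H_end) (i.e., every sequence in U has a subsequence that H_end-converges to some element of F_USCG(X)) if and only if U(α) = ⋃_{u∈U} [u]_α is relatively compact in X for each α ∈ (0,1]. -/
open Set Filter Metric Topology MeasureTheory

/-- The α-cut of a fuzzy set `u : X → ℝ`: for `α ≠ 0` it is `{x | u x ≥ α}`,
and for `α = 0` it is the closure of `{x | u x > 0}`. -/
noncomputable def cut {X : Type*} [MetricSpace X] (u : X → ℝ) (α : ℝ) : Set X :=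
  if α = 0 then closure {x | 0 < u x} else {x | α ≤ u x}

/-- `u` is a normal upper semicontinuous fuzzy set: it takes values in `[0,1]` and
all α-cuts (`α ∈ [0,1]`) are nonempty and closed. -/
def FUSC {X : Type*} [MetricSpace X] (u : X → ℝ) : Prop :=
  (∀ x, u x ∈ Set.Icc (0:ℝ) 1) ∧
    ∀ α ∈ Set.Icc (0:ℝ) 1, (cut u α).Nonempty ∧ IsClosed (cut u α)

/-- `F_USCG(X)`: fuzzy sets in `F_USC(X)` with compact positive α-cuts. -/
def FUSCG {X : Type*} [MetricSpace X] (u : X → ℝ) : Prop :=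
  FUSC u ∧ ∀ α ∈ Set.Ioc (0:ℝ) 1, IsCompact (cut u α)

/-- `F_USCB(X)`: fuzzy sets in `F_USC(X)` with compact support. -/
def FUSCB {X : Type*} [MetricSpace X] (u : X → ℝ) : Prop :=
  FUSC u ∧ IsCompact (cut u 0)

/-- Kuratowski lower limit of a sequence of sets. -/
def kurLiminf {Y : Type*} [MetricSpace Y] (C : ℕ → Set Y) : Set Y :=
  {y | ∃ f : ℕ → Y, (∀ n, f n ∈ C n) ∧ Tendsto f atTop (𝓝 y)}

/-- Kuratowski upper limit of a sequence of sets. -/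
def kurLimsup {Y : Type*} [MetricSpace Y] (C : ℕ → Set Y) : Set Y :=
  {y | ∃ φ : ℕ → ℕ, StrictMono φ ∧
        ∃ f : ℕ → Y, (∀ n, f n ∈ C (φ n)) ∧ Tendsto f atTop (𝓝 y)}

/-- Kuratowski convergence of a sequence of sets to a set. -/
def KurConv {Y : Type*} [MetricSpace Y] (C : ℕ → Set Y) (D : Set Y) : Prop :=
  kurLiminf C = D ∧ kurLimsup C = D

/-- The endograph of `u`: `{(x,t) ∈ X × [0,1] : u x ≥ t}`. -/
def endo {X : Type*} [MetricSpace X] (u : X → ℝ) : Set (X × ℝ) :=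
  {p | p.2 ∈ Set.Icc (0:ℝ) 1 ∧ p.2 ≤ u p.1}

/-- The sendograph of `u`: `end u ∩ ([u]₀ × [0,1])`. -/
noncomputable def sendo {X : Type*} [MetricSpace X] (u : X → ℝ) : Set (X × ℝ) :=
  endo u ∩ (cut u 0) ×ˢ (Set.Icc (0:ℝ) 1)

/-- Γ-convergence: Kuratowski convergence of endographs. -/
def GammaConv {X : Type*} [MetricSpace X] (un : ℕ → X → ℝ) (u : X → ℝ) : Prop :=
  KurConv (fun n => endo (un n)) (endo u)

/-- The endograph metric. -/
noncomputable def Hend {X : Type*} [MetricSpace X] (u v : X → ℝ) : ℝ :=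
  hausdorffDist (endo u) (endo v)

/-- The sendograph metric. -/
noncomputable def Hsend {X : Type*} [MetricSpace X] (u v : X → ℝ) : ℝ :=
  hausdorffDist (sendo u) (sendo v)

/-- The set of platform points of `u`:
`α ∈ (0,1)` with `closure {u > α}` a proper subset of `[u]_α`. -/
def Pset {X : Type*} [MetricSpace X] (u : X → ℝ) : Set ℝ :=
  {α | α ∈ Set.Ioo (0:ℝ) 1 ∧ closure {x | α < u x} ⊂ cut u α}

/-- `P₀(u)`: the set of `α ∈ (0,1)` such that `H([u]_β, [u]_α)` does not tend to `0`
as `β → α`. -/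
def P0set {X : Type*} [MetricSpace X] (u : X → ℝ) : Set ℝ :=
  {α | α ∈ Set.Ioo (0:ℝ) 1 ∧
    ¬ Tendsto (fun β => hausdorffDist (cut u β) (cut u α)) (𝓝[≠] α) (𝓝 0)}



section Aux

variable {X : Type*} [MetricSpace X]

lemma cut_of_ne {u : X → ℝ} {α : ℝ} (h : α ≠ 0) : cut u α = {x | α ≤ u x} := if_neg h

lemma mem_cut_of_ne {u : X → ℝ} {α : ℝ} (h : α ≠ 0) {x : X} : x ∈ cut u α ↔ α ≤ u x := by
  rw [cut_of_ne h]; rfl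

lemma cut_antitone {u : X → ℝ} {α β : ℝ} (hα : α ≠ 0) (hβ : β ≠ 0) (h : α ≤ β) :
    cut u β ⊆ cut u α := by
  intro x hx
  rw [mem_cut_of_ne hβ] at hx
  rw [mem_cut_of_ne hα]
  linarith

lemma mem_endo {u : X → ℝ} {p : X × ℝ} :
    p ∈ endo u ↔ p.2 ∈ Set.Icc (0:ℝ) 1 ∧ p.2 ≤ u p.1 := Iff.rfl

lemma base_mem_endo {u : X → ℝ} (hu : ∀ x, u x ∈ Set.Icc (0:ℝ) 1) (x : X) :
    ((x, (0:ℝ)) : X × ℝ) ∈ endo u :=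
  ⟨⟨le_rfl, zero_le_one⟩, (hu x).1⟩

lemma endo_hausdorffEdist_ne_top {u v : X → ℝ} (hu : ∀ x, u x ∈ Set.Icc (0:ℝ) 1)
    (hv : ∀ x, v x ∈ Set.Icc (0:ℝ) 1) :
    EMetric.hausdorffEdist (endo u) (endo v) ≠ ⊤ := by
  have key : ∀ (w w' : X → ℝ), (∀ x, w' x ∈ Set.Icc (0:ℝ) 1) →
      ∀ p ∈ endo w, ∃ q ∈ endo w', edist p q ≤ (1 : ENNReal) := by
    intro w w' hw' p hp
    refine ⟨(p.1, 0), base_mem_endo hw' p.1, ?_⟩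
    rw [Prod.edist_eq]
    simp only [edist_self]
    refine max_le zero_le ?_
    rw [edist_dist, Real.dist_eq]
    have h1 : |p.2 - 0| ≤ 1 := by
      have := hp.1
      rw [abs_le]
      constructor <;> [linarith [this.1]; linarith [this.2]]
    calc ENNReal.ofReal |p.2 - 0| ≤ ENNReal.ofReal 1 := ENNReal.ofReal_le_ofReal h1
      _ = 1 := ENNReal.ofReal_one
  have hle := EMetric.hausdorffEdist_le_of_mem_edist (key u v hv) (key v u hu)
  exact ne_top_of_le_ne_top (by simp) hle

lemma grid_low {k : ℕ} (hk : 0 < k) {t : ℝ} (h2 : 2 / (k:ℝ) < t) (h1 : t ≤ 1) :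
    ∃ j : ℕ, 1 ≤ j ∧ j ≤ k ∧ (j:ℝ)/(k:ℝ) ≤ t ∧ t - (j:ℝ)/(k:ℝ) < 1/(k:ℝ) := by
  have hk' : (0:ℝ) < k := by exact_mod_cast hk
  have htk : (2:ℝ) < t * k := by
    rw [div_lt_iff₀ hk'] at h2; linarith
  have ht0 : 0 ≤ t * k := by nlinarith
  refine ⟨⌊t * k⌋₊, ?_, ?_, ?_, ?_⟩
  · rw [Nat.one_le_iff_ne_zero, ← Nat.pos_iff_ne_zero]
    rw [Nat.floor_pos]
    linarith
  · have : t * k ≤ (k:ℝ) := by nlinarith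
    calc ⌊t * k⌋₊ ≤ ⌊(k:ℝ)⌋₊ := Nat.floor_le_floor this
      _ = k := Nat.floor_natCast k
  · rw [div_le_iff₀ hk']
    exact Nat.floor_le ht0
  · have := Nat.lt_floor_add_one (t * k)
    rw [sub_lt_iff_lt_add, ← add_div, lt_div_iff₀ hk'] at *
    linarith

lemma grid_high {k : ℕ} (hk : 0 < k) {t : ℝ} (h2 : 2 / (k:ℝ) < t) (h1 : t ≤ 1) :
    ∃ j : ℕ, 1 ≤ j ∧ j ≤ k ∧ (j:ℝ)/(k:ℝ) < t ∧ t - (j:ℝ)/(k:ℝ) ≤ 1/(k:ℝ) := by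
  have hk' : (0:ℝ) < k := by exact_mod_cast hk
  have htk : (2:ℝ) < t * k := by
    rw [div_lt_iff₀ hk'] at h2; linarith
  have hceil3 : 3 ≤ ⌈t * k⌉₊ := by
    have : 2 < ⌈t * k⌉₊ := by
      rw [Nat.lt_ceil]; push_cast; linarith
    omega
  refine ⟨⌈t * k⌉₊ - 1, by omega, ?_, ?_, ?_⟩
  · have hlt : ((⌈t * k⌉₊ - 1 : ℕ) : ℝ) < t * k := by
      rw [← Nat.lt_ceil]; omega
    have : ((⌈t * k⌉₊ - 1 : ℕ) : ℝ) < (k:ℝ) := by nlinarith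
    exact_mod_cast this.le
  · rw [div_lt_iff₀ hk', ← Nat.lt_ceil]; omega
  · have hle : t * k ≤ ((⌈t * k⌉₊ - 1 : ℕ) : ℝ) + 1 := by
      have := Nat.le_ceil (t * k)
      have h3 := hceil3
      push_cast [Nat.cast_sub (by omega : 1 ≤ ⌈t * k⌉₊)]
      linarith
    rw [sub_le_iff_le_add, ← add_div, le_div_iff₀ hk']
    linarith

end Aux


lemma forward_dir {X : Type*} [MetricSpace X] (U : Set (X → ℝ)) (hU : ∀ u ∈ U, FUSCG u)
    (h : ∀ s : ℕ → X → ℝ, (∀ n, s n ∈ U) →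
        ∃ v : X → ℝ, FUSCG v ∧ ∃ φ : ℕ → ℕ, StrictMono φ ∧
          Tendsto (fun n => Hend (s (φ n)) v) atTop (𝓝 0)) :
    ∀ α ∈ Set.Ioc (0:ℝ) 1, IsCompact (closure (⋃ u ∈ U, cut u α)) := by
  intro α hα
  set S := ⋃ u ∈ U, cut u α with hS
  have claim : ∀ x : ℕ → X, (∀ n, x n ∈ S) →
      ∃ l : X, ∃ ψ : ℕ → ℕ, StrictMono ψ ∧ Tendsto (x ∘ ψ) atTop (𝓝 l) := by
    intro x hx
    have hx' : ∀ n, ∃ u ∈ U, x n ∈ cut u α := fun n => by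
      simpa using mem_iUnion₂.mp (hx n)
    choose w hwU hxw using hx'
    obtain ⟨v, hv, φ, hφ, hconv⟩ := h w hwU
    obtain ⟨x₁, hx₁⟩ := (hv.1.2 1 ⟨zero_le_one, le_rfl⟩).1
    rw [mem_cut_of_ne one_ne_zero] at hx₁
    have hvne : (endo v).Nonempty := ⟨(x₁, 1), ⟨⟨zero_le_one, le_rfl⟩, hx₁⟩⟩
    set p : ℕ → X × ℝ := fun n => (x (φ n), α) with hp
    have hpmem : ∀ n, p n ∈ endo (w (φ n)) := by
      intro n
      refine ⟨⟨hα.1.le, hα.2⟩, ?_⟩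
      have := hxw (φ n)
      rwa [mem_cut_of_ne hα.1.ne'] at this
    have hfin : ∀ n, EMetric.hausdorffEdist (endo (w (φ n))) (endo v) ≠ ⊤ := fun n =>
      endo_hausdorffEdist_ne_top ((hU _ (hwU (φ n))).1.1) hv.1.1
    have hinf : ∀ n, infDist (p n) (endo v) ≤ Hend (w (φ n)) v := fun n =>
      infDist_le_hausdorffDist_of_mem (hpmem n) (hfin n)
    have hq : ∀ n : ℕ, ∃ q ∈ endo v, dist (p n) q < infDist (p n) (endo v) + 1/(n+1) := by
      intro n
      apply (infDist_lt_iff hvne).mp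
      have : (0:ℝ) < 1/((n:ℝ)+1) := by positivity
      linarith
    choose q hqmem hqd using hq
    have hinf0 : Tendsto (fun n => infDist (p n) (endo v)) atTop (𝓝 0) :=
      squeeze_zero (fun n => infDist_nonneg) hinf hconv
    have hd0 : Tendsto (fun n => dist (p n) (q n)) atTop (𝓝 0) := by
      have hsum : Tendsto (fun n : ℕ => infDist (p n) (endo v) + 1/((n:ℝ)+1)) atTop (𝓝 0) := by
        have := hinf0.add tendsto_one_div_add_atTop_nhds_zero_nat
        simpa using this
      exact squeeze_zero (fun n => dist_nonneg) (fun n => (hqd n).le) hsum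
    obtain ⟨N, hN⟩ := (Metric.tendsto_atTop.mp hd0 (α/2) (by linarith [hα.1]))
    have hN' : ∀ n ≥ N, dist (p n) (q n) < α/2 := by
      intro n hn
      have := hN n hn
      rwa [Real.dist_eq, sub_zero, abs_of_nonneg dist_nonneg] at this
    have hymem : ∀ n, (q (n + N)).1 ∈ cut v (α/2) := by
      intro n
      have hd := hN' (n + N) (Nat.le_add_left _ _)
      have h2 : dist (p (n + N)).2 (q (n + N)).2 ≤ dist (p (n + N)) (q (n + N)) := by
        rw [Prod.dist_eq]; exact le_max_right _ _
      have hα2 : |α - (q (n + N)).2| < α/2 := by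
        have : dist α (q (n + N)).2 < α/2 := lt_of_le_of_lt h2 hd
        rwa [Real.dist_eq] at this
      have htv : (q (n + N)).2 ≤ v (q (n + N)).1 := (hqmem (n + N)).2
      rw [mem_cut_of_ne (by linarith [hα.1] : α/2 ≠ 0)]
      have : α - α/2 < (q (n + N)).2 := by
        cases abs_lt.mp hα2 with
        | intro h1 h2' => linarith
      linarith
    have hcpt : IsCompact (cut v (α/2)) := hv.2 (α/2) ⟨by linarith [hα.1], by linarith [hα.2, hα.1]⟩
    obtain ⟨a, _, ψ, hψ, hlim⟩ := hcpt.tendsto_subseq hymem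
    set σ : ℕ → ℕ := fun n => ψ n + N with hσ
    have hσmono : StrictMono σ := fun a b hab => by
      simp only [hσ]; exact Nat.add_lt_add_right (hψ hab) N
    refine ⟨a, φ ∘ σ, hφ.comp hσmono, ?_⟩
    rw [tendsto_iff_dist_tendsto_zero]
    have hbound : ∀ n, dist ((x ∘ (φ ∘ σ)) n) a ≤
        dist (p (σ n)) (q (σ n)) + dist ((q (σ n)).1) a := by
      intro n
      have h1 : dist (x (φ (σ n))) ((q (σ n)).1) ≤ dist (p (σ n)) (q (σ n)) := by
        rw [Prod.dist_eq]; exact le_max_left _ _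
      calc dist ((x ∘ (φ ∘ σ)) n) a ≤ dist (x (φ (σ n))) ((q (σ n)).1) + dist ((q (σ n)).1) a :=
            dist_triangle _ _ _
        _ ≤ _ := by gcongr
    have hz : Tendsto (fun n => dist (p (σ n)) (q (σ n)) + dist ((q (σ n)).1) a) atTop (𝓝 0) := by
      have t1 : Tendsto (fun n => dist (p (σ n)) (q (σ n))) atTop (𝓝 0) :=
        hd0.comp hσmono.tendsto_atTop
      have t2 : Tendsto (fun n => dist ((q (σ n)).1) a) atTop (𝓝 0) := by
        exact tendsto_iff_dist_tendsto_zero.mp hlim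
      simpa using t1.add t2
    exact squeeze_zero (fun n => dist_nonneg) hbound hz
  -- closure is sequentially compact, hence compact
  apply IsSeqCompact.isCompact
  intro x hx
  have hy : ∀ n : ℕ, ∃ y ∈ S, dist (x n) y < 1/((n:ℝ)+1) := by
    intro n
    exact Metric.mem_closure_iff.mp (hx n) _ (by positivity)
  choose y hyS hyd using hy
  obtain ⟨l, ψ, hψ, hlim⟩ := claim y hyS
  refine ⟨l, mem_closure_of_tendsto hlim (Eventually.of_forall fun n => hyS (ψ n)), ψ, hψ, ?_⟩
  rw [tendsto_iff_dist_tendsto_zero]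
  have hbound : ∀ n, dist (x (ψ n)) l ≤ 1/((ψ n : ℝ)+1) + dist (y (ψ n)) l := fun n =>
    (dist_triangle _ _ _).trans (by gcongr; exact (hyd (ψ n)).le)
  have hz : Tendsto (fun n => 1/((ψ n : ℝ)+1) + dist (y (ψ n)) l) atTop (𝓝 0) := by
    have t1 : Tendsto (fun n => 1/((ψ n : ℝ)+1)) atTop (𝓝 0) :=
      tendsto_one_div_add_atTop_nhds_zero_nat.comp hψ.tendsto_atTop
    have t2 := tendsto_iff_dist_tendsto_zero.mp hlim
    simpa using t1.add t2
  exact squeeze_zero (fun n => dist_nonneg) hbound hz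

open TopologicalSpace in
lemma backward_dir {X : Type*} [MetricSpace X] (U : Set (X → ℝ)) (hU : ∀ u ∈ U, FUSCG u)
    (h : ∀ α ∈ Set.Ioc (0:ℝ) 1, IsCompact (closure (⋃ u ∈ U, cut u α)))
    (s : ℕ → X → ℝ) (hs : ∀ n, s n ∈ U) :
    ∃ v : X → ℝ, FUSCG v ∧ ∃ φ : ℕ → ℕ, StrictMono φ ∧
      Tendsto (fun n => Hend (s (φ n)) v) atTop (𝓝 0) := by
  classical
  set I := {q : ℚ // 0 < q ∧ q ≤ 1} with hI
  have hIpos : ∀ i : I, (0:ℝ) < ((i.1 : ℚ) : ℝ) := fun i => by exact_mod_cast i.2.1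
  have hIle : ∀ i : I, ((i.1 : ℚ) : ℝ) ≤ 1 := fun i => by exact_mod_cast i.2.2
  set KS : I → Set X := fun i => closure (⋃ u ∈ U, cut u ((i.1 : ℚ) : ℝ)) with hKSdef
  have hKS : ∀ i, IsCompact (KS i) := fun i => h _ ⟨hIpos i, hIle i⟩
  have hsub : ∀ (n : ℕ) (i : I), cut (s n) ((i.1 : ℚ) : ℝ) ⊆ KS i := by
    intro n i x hx
    exact subset_closure (mem_iUnion₂.mpr ⟨s n, hs n, hx⟩)
  have hFn : ∀ n, FUSCG (s n) := fun n => hU _ (hs n)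
  have hcutne : ∀ (n : ℕ) (i : I), (cut (s n) ((i.1 : ℚ) : ℝ)).Nonempty := fun n i =>
    ((hFn n).1.2 _ ⟨(hIpos i).le, hIle i⟩).1
  have hcutcl : ∀ (n : ℕ) (i : I), IsClosed (cut (s n) ((i.1 : ℚ) : ℝ)) := fun n i =>
    ((hFn n).1.2 _ ⟨(hIpos i).le, hIle i⟩).2
  haveI : ∀ i : I, CompactSpace (KS i) := fun i => isCompact_iff_compactSpace.mp (hKS i)
  set F : ℕ → ∀ i : I, NonemptyCompacts (KS i) := fun n i =>
    ⟨⟨Subtype.val ⁻¹' cut (s n) ((i.1 : ℚ) : ℝ),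
      ((hcutcl n i).preimage continuous_subtype_val).isCompact⟩, by
        obtain ⟨x, hx⟩ := hcutne n i
        exact ⟨⟨x, hsub n i hx⟩, hx⟩⟩ with hF
  obtain ⟨G, φ, hφ, hGconv⟩ := SeqCompactSpace.tendsto_subseq F
  set C : I → Set X := fun i => Subtype.val '' ((G i : Set (KS i))) with hC
  have hCc : ∀ i, IsCompact (C i) := fun i =>
    ((G i).isCompact).image continuous_subtype_val
  have hCne : ∀ i, (C i).Nonempty := fun i => ((G i).nonempty).image _
  have hCcl : ∀ i, IsClosed (C i) := fun i => (hCc i).isClosed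
  have hfinCC : ∀ (n : ℕ) (i : I),
      EMetric.hausdorffEdist (cut (s n) ((i.1 : ℚ) : ℝ)) (C i) ≠ ⊤ := by
    intro n i
    apply Metric.hausdorffEdist_ne_top_of_nonempty_of_bounded (hcutne n i) (hCne i)
    · exact ((hKS i).isBounded).subset (hsub n i)
    · exact (hCc i).isBounded
  have hdist : ∀ i : I, Tendsto
      (fun n => hausdorffDist (cut (s (φ n)) ((i.1 : ℚ) : ℝ)) (C i)) atTop (𝓝 0) := by
    intro i
    have h1 : Tendsto (fun n => F (φ n) i) atTop (𝓝 (G i)) := by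
      have := hGconv
      rw [tendsto_pi_nhds] at this
      exact this i
    have h2 := tendsto_iff_dist_tendsto_zero.mp h1
    have heq : ∀ n, dist (F (φ n) i) (G i)
        = hausdorffDist (cut (s (φ n)) ((i.1 : ℚ) : ℝ)) (C i) := by
      intro n
      rw [NonemptyCompacts.dist_eq]
      rw [← hausdorffDist_image (isometry_subtype_coe : Isometry ((↑) : (KS i) → X))]
      congr 1
      show Subtype.val '' (Subtype.val ⁻¹' cut (s (φ n)) ((i.1 : ℚ) : ℝ)) = _
      rw [Subtype.image_preimage_coe]
      exact Set.inter_eq_right.mpr (hsub (φ n) i)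
    simpa only [heq] using h2
  -- monotonicity of the limit cuts
  have hCmono : ∀ i j : I, ((i.1 : ℚ) : ℝ) ≤ ((j.1 : ℚ) : ℝ) → C j ⊆ C i := by
    intro i j hij x hx
    rw [(hCcl i).mem_iff_infDist_zero (hCne i)]
    have key : ∀ n, infDist x (C i) ≤
        hausdorffDist (cut (s (φ n)) ((j.1 : ℚ) : ℝ)) (C j)
          + hausdorffDist (cut (s (φ n)) ((i.1 : ℚ) : ℝ)) (C i) := by
      intro n
      have e1 : infDist x (C i) ≤ infDist x (cut (s (φ n)) ((i.1 : ℚ) : ℝ))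
          + hausdorffDist (cut (s (φ n)) ((i.1 : ℚ) : ℝ)) (C i) :=
        infDist_le_infDist_add_hausdorffDist (hfinCC (φ n) i)
      have e2 : infDist x (cut (s (φ n)) ((i.1 : ℚ) : ℝ))
          ≤ infDist x (cut (s (φ n)) ((j.1 : ℚ) : ℝ)) :=
        infDist_le_infDist_of_subset
          (cut_antitone (hIpos i).ne' (hIpos j).ne' hij) (hcutne (φ n) j)
      have e3 : infDist x (cut (s (φ n)) ((j.1 : ℚ) : ℝ)) ≤ infDist x (C j)
          + hausdorffDist (C j) (cut (s (φ n)) ((j.1 : ℚ) : ℝ)) :=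
        infDist_le_infDist_add_hausdorffDist (by
          rw [EMetric.hausdorffEdist_comm]; exact hfinCC (φ n) j)
      have e4 : infDist x (C j) = 0 := infDist_zero_of_mem hx
      have e5 : hausdorffDist (C j) (cut (s (φ n)) ((j.1 : ℚ) : ℝ))
          = hausdorffDist (cut (s (φ n)) ((j.1 : ℚ) : ℝ)) (C j) := hausdorffDist_comm
      linarith
    have hlim0 : Tendsto (fun n =>
        hausdorffDist (cut (s (φ n)) ((j.1 : ℚ) : ℝ)) (C j)
          + hausdorffDist (cut (s (φ n)) ((i.1 : ℚ) : ℝ)) (C i)) atTop (𝓝 0) := by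
      simpa using (hdist j).add (hdist i)
    exact le_antisymm (ge_of_tendsto' hlim0 key) infDist_nonneg
  -- the limit fuzzy set
  set V : X → Set ℝ := fun x =>
    insert (0:ℝ) {t | ∃ i : I, ((i.1 : ℚ) : ℝ) = t ∧ x ∈ C i} with hV
  set v : X → ℝ := fun x => sSup (V x) with hv
  have hVne : ∀ x, (V x).Nonempty := fun x => ⟨0, mem_insert _ _⟩
  have hVbdd : ∀ x, BddAbove (V x) := by
    intro x
    refine ⟨1, ?_⟩
    rintro t (rfl | ⟨i, rfl, _⟩)
    · exact zero_le_one
    · exact hIle i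
  have hv0 : ∀ x, 0 ≤ v x := fun x => le_csSup (hVbdd x) (mem_insert _ _)
  have hv1 : ∀ x, v x ≤ 1 := by
    intro x
    refine csSup_le (hVne x) ?_
    rintro t (rfl | ⟨i, rfl, _⟩)
    · exact zero_le_one
    · exact hIle i
  have hvge : ∀ (i : I) (x : X), x ∈ C i → ((i.1 : ℚ) : ℝ) ≤ v x := fun i x hx =>
    le_csSup (hVbdd x) (mem_insert_iff.mpr (Or.inr ⟨i, rfl, hx⟩))
  have hA1 : ∀ (α : ℝ) (x : X), 0 < α → α ≤ v x →
      ∀ i : I, ((i.1 : ℚ) : ℝ) < α → x ∈ C i := by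
    intro α x hα hvx i hi
    obtain ⟨t, ht, hlt⟩ := exists_lt_of_lt_csSup (hVne x) (lt_of_lt_of_le hi hvx)
    rcases mem_insert_iff.mp ht with rfl | ⟨j, rfl, hxj⟩
    · exact absurd hlt (not_lt.mpr (hIpos i).le)
    · exact hCmono i j hlt.le hxj
  have hA2 : ∀ (α : ℝ) (x : X), 0 < α → α ≤ 1 →
      (∀ i : I, ((i.1 : ℚ) : ℝ) < α → x ∈ C i) → α ≤ v x := by
    intro α x hα hα1 hall
    refine le_of_forall_lt fun c hc => ?_
    obtain ⟨q, hq1, hq2⟩ := exists_rat_btwn (show max c 0 < α from max_lt hc hα)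
    have hq0 : 0 < q := by exact_mod_cast lt_of_le_of_lt (le_max_right c 0) hq1
    have hqle : q ≤ 1 := by exact_mod_cast hq2.le.trans hα1
    have hx := hall ⟨q, hq0, hqle⟩ hq2
    calc c ≤ max c 0 := le_max_left _ _
      _ < (q:ℝ) := hq1
      _ ≤ v x := hvge ⟨q, hq0, hqle⟩ x hx
  have hcutv : ∀ α : ℝ, 0 < α → α ≤ 1 →
      cut v α = ⋂ j : {i : I // ((i.1 : ℚ) : ℝ) < α}, C j.1 := by
    intro α hα hα1
    ext x
    rw [mem_cut_of_ne hα.ne', Set.mem_iInter]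
    constructor
    · intro hvx j
      exact hA1 α x hα hvx j.1 j.2
    · intro hall
      exact hA2 α x hα hα1 (fun i hi => hall ⟨i, hi⟩)
  have hvprops : ∀ α : ℝ, 0 < α → α ≤ 1 →
      (cut v α).Nonempty ∧ IsClosed (cut v α) ∧ IsCompact (cut v α) := by
    intro α hα hα1
    obtain ⟨q, hq0, hqα⟩ := exists_rat_btwn hα
    have hq0' : 0 < q := by exact_mod_cast hq0
    have hqle : q ≤ 1 := by exact_mod_cast hqα.le.trans hα1
    set j0 : {i : I // ((i.1 : ℚ) : ℝ) < α} := ⟨⟨q, hq0', hqle⟩, hqα⟩ with hj0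
    haveI : Nonempty {i : I // ((i.1 : ℚ) : ℝ) < α} := ⟨j0⟩
    rw [hcutv α hα hα1]
    have hdir : Directed (· ⊇ ·) (fun j : {i : I // ((i.1 : ℚ) : ℝ) < α} => C j.1) := by
      intro a b
      rcases le_total (a.1.1 : ℚ) b.1.1 with hab | hab
      · exact ⟨b, hCmono a.1 b.1 (by exact_mod_cast hab), subset_rfl⟩
      · exact ⟨a, subset_rfl, hCmono b.1 a.1 (by exact_mod_cast hab)⟩
    refine ⟨IsCompact.nonempty_iInter_of_directed_nonempty_isCompact_isClosed _ hdir
        (fun j => hCne j.1) (fun j => hCc j.1) (fun j => hCcl j.1),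
      isClosed_iInter (fun j => hCcl j.1), ?_⟩
    exact IsCompact.of_isClosed_subset (hCc j0.1)
      (isClosed_iInter fun j => hCcl j.1) (iInter_subset _ j0)
  have hvF : FUSCG v := by
    refine ⟨⟨fun x => ⟨hv0 x, hv1 x⟩, ?_⟩, ?_⟩
    · intro α hα
      by_cases h0 : α = 0
      · subst h0
        constructor
        · obtain ⟨x, hx⟩ := (hvprops 1 one_pos le_rfl).1
          rw [mem_cut_of_ne one_ne_zero] at hx
          have hxmem : x ∈ {y : X | 0 < v y} := by
            simp only [Set.mem_setOf_eq]; linarith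
          refine ⟨x, ?_⟩
          show x ∈ cut v 0
          unfold cut
          rw [if_pos rfl]
          exact subset_closure hxmem
        · show IsClosed (cut v 0)
          unfold cut
          rw [if_pos rfl]
          exact isClosed_closure
      · have hα' : 0 < α := lt_of_le_of_ne hα.1 (Ne.symm h0)
        exact ⟨(hvprops α hα' hα.2).1, (hvprops α hα' hα.2).2.1⟩
    · intro α hα
      exact (hvprops α hα.1 hα.2).2.2
  refine ⟨v, hvF, φ, hφ, ?_⟩
  rw [Metric.tendsto_atTop]
  intro ε hε
  obtain ⟨k, hk⟩ := exists_nat_gt (4/ε)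
  have hk0 : 0 < k := by
    have h4 : (0:ℝ) < 4/ε := by positivity
    have : (0:ℝ) < (k:ℝ) := lt_trans h4 hk
    exact_mod_cast this
  have hk' : (0:ℝ) < (k:ℝ) := by exact_mod_cast hk0
  have hk4 : 1/(k:ℝ) < ε/4 := by
    rw [div_lt_div_iff₀ hk' (by norm_num : (0:ℝ) < 4)]
    have := (div_lt_iff₀ hε).mp hk
    linarith
  -- grid
  set igrid : Fin k → I := fun m => ⟨((m : ℕ) + 1 : ℚ)/(k : ℚ), by
      constructor
      · positivity
      · rw [div_le_one (by exact_mod_cast hk0)]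
        exact_mod_cast Nat.succ_le_of_lt m.2⟩ with higrid
  have higridval : ∀ m : Fin k, (((igrid m).1 : ℚ) : ℝ) = ((m : ℕ) + 1 : ℝ)/(k : ℝ) := by
    intro m
    simp only [higrid]
    push_cast
    ring
  have hev : ∀ᶠ n in atTop, ∀ m : Fin k,
      hausdorffDist (cut (s (φ n)) (((igrid m).1 : ℚ) : ℝ)) (C (igrid m)) < ε/4 := by
    rw [eventually_all]
    intro m
    exact (hdist (igrid m)).eventually_lt_const (by positivity)
  obtain ⟨N, hN⟩ := eventually_atTop.mp hev
  refine ⟨N, fun n hn => ?_⟩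
  have h0 : (0:ℝ) ≤ Hend (s (φ n)) v := hausdorffDist_nonneg
  rw [Real.dist_eq, sub_zero, abs_of_nonneg h0]
  have main : Hend (s (φ n)) v ≤ ε/2 := by
    show hausdorffDist (endo (s (φ n))) (endo v) ≤ ε/2
    apply hausdorffDist_le_of_mem_dist (by positivity)
    · -- endo (s (φ n)) ⊆ nbhd of endo v
      rintro ⟨x, t⟩ ⟨⟨ht0, ht1⟩, htu⟩
      by_cases hts : t ≤ ε/2
      · refine ⟨(x, 0), base_mem_endo (fun y => ⟨hv0 y, hv1 y⟩) x, ?_⟩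
        rw [Prod.dist_eq]
        apply max_le
        · rw [dist_self]; positivity
        · rw [Real.dist_eq, sub_zero, abs_of_nonneg ht0]; exact hts
      · push_neg at hts
        have h2k : 2/(k:ℝ) < t := by
          have : 2/(k:ℝ) = 2 * (1/(k:ℝ)) := by ring
          rw [this]
          calc 2 * (1/(k:ℝ)) < 2 * (ε/4) := by linarith
            _ = ε/2 := by ring
            _ < t := hts
        obtain ⟨j, hj1, hjk, hjle, hjgap⟩ := grid_low hk0 h2k ht1
        set m : Fin k := ⟨j - 1, by omega⟩ with hm
        have hmv : (((igrid m).1 : ℚ) : ℝ) = (j:ℝ)/(k:ℝ) := by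
          rw [higridval]
          congr 1
          show ((j - 1 : ℕ) : ℝ) + 1 = (j : ℝ)
          have hj' : (j - 1 : ℕ) + 1 = j := by omega
          exact_mod_cast hj'
        have hx : x ∈ cut (s (φ n)) (((igrid m).1 : ℚ) : ℝ) := by
          rw [mem_cut_of_ne (hIpos (igrid m)).ne', hmv]
          linarith
        obtain ⟨y, hy, hdy⟩ :=
          exists_dist_lt_of_hausdorffDist_lt hx (hN n hn m) (hfinCC (φ n) (igrid m))
        refine ⟨(y, (((igrid m).1 : ℚ) : ℝ)),
          ⟨⟨(hIpos (igrid m)).le, hIle (igrid m)⟩, hvge (igrid m) y hy⟩, ?_⟩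
        rw [Prod.dist_eq]
        apply max_le (hdy.le.trans (by linarith))
        rw [Real.dist_eq, hmv, abs_of_nonneg (by linarith)]
        linarith
    · -- endo v ⊆ nbhd of endo (s (φ n))
      rintro ⟨x, t⟩ ⟨⟨ht0, ht1⟩, htv⟩
      by_cases hts : t ≤ ε/2
      · refine ⟨(x, 0), base_mem_endo (hFn (φ n)).1.1 x, ?_⟩
        rw [Prod.dist_eq]
        apply max_le
        · rw [dist_self]; positivity
        · rw [Real.dist_eq, sub_zero, abs_of_nonneg ht0]; exact hts
      · push_neg at hts
        have h2k : 2/(k:ℝ) < t := by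
          have : 2/(k:ℝ) = 2 * (1/(k:ℝ)) := by ring
          rw [this]
          calc 2 * (1/(k:ℝ)) < 2 * (ε/4) := by linarith
            _ = ε/2 := by ring
            _ < t := hts
        obtain ⟨j, hj1, hjk, hjlt, hjgap⟩ := grid_high hk0 h2k ht1
        set m : Fin k := ⟨j - 1, by omega⟩ with hm
        have hmv : (((igrid m).1 : ℚ) : ℝ) = (j:ℝ)/(k:ℝ) := by
          rw [higridval]
          congr 1
          show ((j - 1 : ℕ) : ℝ) + 1 = (j : ℝ)
          have hj' : (j - 1 : ℕ) + 1 = j := by omega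
          exact_mod_cast hj'
        have hxC : x ∈ C (igrid m) := by
          apply hA1 t x (by linarith) htv
          rw [hmv]
          exact hjlt
        obtain ⟨y, hy, hdy⟩ :=
          exists_dist_lt_of_hausdorffDist_lt' hxC (hN n hn m) (hfinCC (φ n) (igrid m))
        refine ⟨(y, (((igrid m).1 : ℚ) : ℝ)),
          ⟨⟨(hIpos (igrid m)).le, hIle (igrid m)⟩, by
            have := hy
            rwa [mem_cut_of_ne (hIpos (igrid m)).ne'] at this⟩, ?_⟩
        rw [Prod.dist_eq]
        apply max_le
        · rw [dist_comm]
          exact hdy.le.trans (by linarith)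
        · rw [Real.dist_eq, hmv, abs_of_nonneg (by linarith)]
          linarith
  linarith [main]


theorem relatively_compact_FUSCG_iff_cuts_relatively_compact
    {X : Type*} [MetricSpace X] (U : Set (X → ℝ)) (hU : ∀ u ∈ U, FUSCG u) :
    (∀ s : ℕ → X → ℝ, (∀ n, s n ∈ U) →
        ∃ v : X → ℝ, FUSCG v ∧ ∃ φ : ℕ → ℕ, StrictMono φ ∧
          Tendsto (fun n => Hend (s (φ n)) v) atTop (𝓝 0)) ↔
      ∀ α ∈ Set.Ioc (0:ℝ) 1, IsCompact (closure (⋃ u ∈ U, cut u α)) := by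
  constructor
  · intro h
    exact forward_dir U hU h
  · intro h s hs
    exact backward_dir U hU h s hs
end

section
/- Let (X,d) be a metric space and let U be a subset of F_USCG(X). Then the following statements are equivalent: (i) U is compact in (F_USCG(X), H_end); (ii) U(α) = ⋃_{u∈U} [u]_α is relatively compact in X for each α ∈ (0,1] and U is closed in (F_USCG(X), H_end); (iii) U(α) is compact in X for each α ∈ (0,1] and U is closed in (F_USCG(X), H_end). -/
open Set Filter Metric Topology MeasureTheory
open EMetric

section Basics
variable {X : Type*} [MetricSpace X]

lemma cut_pos_eq (u : X → ℝ) {α : ℝ} (hα : α ≠ 0) : cut u α = {x | α ≤ u x} := if_neg hα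

lemma endo_mem_zero {u : X → ℝ} (hu : ∀ x, 0 ≤ u x) (x : X) : (x, (0:ℝ)) ∈ endo u :=
  ⟨⟨le_refl 0, zero_le_one⟩, hu x⟩

lemma FUSC.nonneg {u : X → ℝ} (hu : FUSC u) (x : X) : 0 ≤ u x := (hu.1 x).1

lemma endo_nonempty {u : X → ℝ} (hu : FUSC u) : (endo u).Nonempty := by
  obtain ⟨x, hx⟩ := (hu.2 1 ⟨zero_le_one, le_refl 1⟩).1
  rw [cut_pos_eq u one_ne_zero] at hx
  exact ⟨(x, 1), ⟨⟨zero_le_one, le_refl 1⟩, hx⟩⟩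

lemma isClosed_endo {u : X → ℝ} (hu : FUSC u) : IsClosed (endo u) := by
  apply IsSeqClosed.isClosed
  intro p q hp hq
  have h1 : Tendsto (fun n => (p n).1) atTop (𝓝 q.1) :=
    (continuous_fst.tendsto q).comp hq
  have h2 : Tendsto (fun n => (p n).2) atTop (𝓝 q.2) :=
    (continuous_snd.tendsto q).comp hq
  have hq0 : 0 ≤ q.2 := ge_of_tendsto' h2 fun n => (hp n).1.1
  have hq1 : q.2 ≤ 1 := le_of_tendsto' h2 fun n => (hp n).1.2
  refine ⟨⟨hq0, hq1⟩, ?_⟩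
  rcases le_or_gt q.2 0 with h | h
  · exact h.trans (hu.nonneg q.1)
  · have key : ∀ β : ℝ, 0 < β → β < q.2 → β ≤ u q.1 := by
      intro β hβ0 hβq
      have hcl := (hu.2 β ⟨hβ0.le, hβq.le.trans hq1⟩).2
      rw [cut_pos_eq u hβ0.ne'] at hcl
      have hev : ∀ᶠ n in atTop, (p n).1 ∈ {x | β ≤ u x} := by
        filter_upwards [h2.eventually (eventually_gt_nhds hβq)] with n hn
        exact (le_of_lt hn).trans (hp n).2
      exact hcl.mem_of_tendsto h1 hev
    by_contra hlt
    push_neg at hlt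
    have h0 : 0 ≤ u q.1 := hu.nonneg q.1
    have := key ((u q.1 + q.2)/2) (by linarith) (by linarith)
    linarith

lemma endo_edist_aux {u v : X → ℝ} (hv : ∀ x, 0 ≤ v x) :
    ∀ p ∈ endo u, ∃ q ∈ endo v, edist p q ≤ 1 := by
  intro p hp
  refine ⟨(p.1, 0), endo_mem_zero hv p.1, ?_⟩
  rw [Prod.edist_eq]
  simp only [edist_self, edist_dist, Real.dist_eq, sub_zero]
  rw [abs_of_nonneg hp.1.1]
  exact max_le (zero_le_one) (by simpa using ENNReal.ofReal_le_one.2 hp.1.2)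

lemma endo_edist_le {u v : X → ℝ} (hu : ∀ x, 0 ≤ u x) (hv : ∀ x, 0 ≤ v x) :
    hausdorffEdist (endo u) (endo v) ≤ 1 :=
  hausdorffEdist_le_of_mem_edist (endo_edist_aux hv) (endo_edist_aux hu)

lemma endo_edist_ne_top {u v : X → ℝ} (hu : FUSC u) (hv : FUSC v) :
    hausdorffEdist (endo u) (endo v) ≠ ⊤ :=
  ((endo_edist_le hu.nonneg hv.nonneg).trans_lt (by norm_num)).ne

lemma eq_of_Hend_zero {u v : X → ℝ} (hu : FUSC u) (hv : FUSC v) (h : Hend u v = 0) : u = v := by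
  have hE : endo u = endo v :=
    ((isClosed_endo hu).hausdorffDist_zero_iff_eq (isClosed_endo hv)
      (endo_edist_ne_top hu hv)).1 h
  funext x
  have h1 : (x, u x) ∈ endo v := hE ▸ ⟨hu.1 x, le_refl _⟩
  have h2 : (x, v x) ∈ endo u := hE ▸ ⟨hv.1 x, le_refl _⟩
  exact le_antisymm h1.2 h2.2

lemma mem_of_infDist_tendsto_zero {Y : Type*} [MetricSpace Y] {p : Y} {A : Set Y}
    (hA : IsClosed A) (hAne : A.Nonempty) {f : ℕ → ℝ}
    (hge : ∀ᶠ n in atTop, infDist p A ≤ f n) (h0 : Tendsto f atTop (𝓝 0)) : p ∈ A := by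
  have h1 : infDist p A ≤ 0 := ge_of_tendsto h0 hge
  have h2 := le_antisymm h1 infDist_nonneg
  rw [← hA.closure_eq]
  exact (mem_closure_iff_infDist_zero hAne).mpr h2

end Basics


theorem imp13 {X : Type*} [MetricSpace X] (U : Set (X → ℝ)) (hU : ∀ u ∈ U, FUSCG u)
    (h1 : ∀ s : ℕ → X → ℝ, (∀ n, s n ∈ U) →
      ∃ v ∈ U, ∃ φ : ℕ → ℕ, StrictMono φ ∧
        Tendsto (fun n => Hend (s (φ n)) v) atTop (𝓝 0)) :
    ((∀ α ∈ Set.Ioc (0:ℝ) 1, IsCompact (⋃ u ∈ U, cut u α)) ∧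
      (∀ s : ℕ → X → ℝ, (∀ n, s n ∈ U) → ∀ v : X → ℝ, FUSCG v →
        Tendsto (fun n => Hend (s n) v) atTop (𝓝 0) → v ∈ U)) := by
  constructor
  · intro α hα
    apply IsSeqCompact.isCompact
    intro x hx
    have hx' : ∀ n, ∃ u, u ∈ U ∧ x n ∈ cut u α := by
      intro n
      simpa only [mem_iUnion, exists_prop] using hx n
    choose u huU hxu using hx'
    obtain ⟨v, hvU, φ, hφ, hconv⟩ := h1 u huU
    have hvG := hU v hvU
    have hpmem : ∀ n, ((x (φ n), α) : X × ℝ) ∈ endo (u (φ n)) := by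
      intro n
      refine ⟨⟨hα.1.le, hα.2⟩, ?_⟩
      have := hxu (φ n)
      rwa [cut_pos_eq _ hα.1.ne'] at this
    have hfin : ∀ n, EMetric.hausdorffEdist (endo (u (φ n))) (endo v) ≠ ⊤ :=
      fun n => endo_edist_ne_top (hU _ (huU (φ n))).1 hvG.1
    have hvne : (endo v).Nonempty := endo_nonempty hvG.1
    have hinf : ∀ n, infDist ((x (φ n), α) : X × ℝ) (endo v) ≤ Hend (u (φ n)) v :=
      fun n => infDist_le_hausdorffDist_of_mem (hpmem n) (hfin n)
    have hq : ∀ n, ∃ q ∈ endo v, dist ((x (φ n), α) : X × ℝ) q < Hend (u (φ n)) v + 1/(n+1) := by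
      intro n
      apply (infDist_lt_iff hvne).1
      have h01 : (0:ℝ) < 1/(n+1) := by positivity
      linarith [hinf n]
    choose q hqmem hqdist using hq
    have hd0 : Tendsto (fun n => dist ((x (φ n), α) : X × ℝ) (q n)) atTop (𝓝 0) := by
      have hle : ∀ n, dist ((x (φ n), α) : X × ℝ) (q n) ≤ Hend (u (φ n)) v + 1/(n+1) :=
        fun n => (hqdist n).le
      have hlim : Tendsto (fun n : ℕ => Hend (u (φ n)) v + 1/(n+1)) atTop (𝓝 (0 + 0)) :=
        hconv.add tendsto_one_div_add_atTop_nhds_zero_nat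
      rw [add_zero] at hlim
      exact squeeze_zero (fun n => dist_nonneg) hle hlim
    have hdsnd : ∀ n, dist α (q n).2 ≤ dist ((x (φ n), α) : X × ℝ) (q n) := by
      intro n; rw [Prod.dist_eq]; exact le_max_right _ _
    have hdfst : ∀ n, dist (x (φ n)) (q n).1 ≤ dist ((x (φ n), α) : X × ℝ) (q n) := by
      intro n; rw [Prod.dist_eq]; exact le_max_left _ _
    have ht : Tendsto (fun n => (q n).2) atTop (𝓝 α) := by
      rw [tendsto_iff_dist_tendsto_zero]
      exact squeeze_zero (fun n => dist_nonneg)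
        (fun n => by rw [dist_comm]; exact hdsnd n) hd0
    obtain ⟨M, hM⟩ :=
      (ht.eventually (eventually_gt_nhds (by linarith [hα.1] : α/2 < α))).exists_forall_of_atTop
    have hzmem : ∀ m, (q (M + m)).1 ∈ cut v (α/2) := by
      intro m
      rw [cut_pos_eq _ (ne_of_gt (half_pos hα.1))]
      exact le_trans (hM (M + m) (Nat.le_add_right M m)).le ((hqmem (M + m)).2)
    have hcvcpt : IsCompact (cut v (α/2)) :=
      hvG.2 (α/2) ⟨half_pos hα.1, by linarith [hα.2, hα.1]⟩
    obtain ⟨a, ha, ψ, hψ, hψconv⟩ := hcvcpt.tendsto_subseq hzmem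
    have hidxtop : Tendsto (fun j => M + ψ j) atTop atTop :=
      tendsto_atTop_mono (fun j => hψ.le_apply.trans (Nat.le_add_left _ _)) tendsto_id
    have hxa : Tendsto (fun j => x (φ (M + ψ j))) atTop (𝓝 a) := by
      rw [tendsto_iff_dist_tendsto_zero]
      have hb : ∀ j, dist (x (φ (M + ψ j))) a ≤
          dist ((x (φ (M + ψ j)), α) : X × ℝ) (q (M + ψ j)) + dist ((q (M + ψ j)).1) a :=
        fun j => (dist_triangle _ _ _).trans (add_le_add_left (hdfst _) _)
      have h1 : Tendsto (fun j => dist ((x (φ (M + ψ j)), α) : X × ℝ) (q (M + ψ j)))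
          atTop (𝓝 0) := hd0.comp hidxtop
      have h2 : Tendsto (fun j => dist ((q (M + ψ j)).1) a) atTop (𝓝 0) := by
        have := (tendsto_iff_dist_tendsto_zero).1 hψconv
        exact this
      have hsum := h1.add h2
      rw [add_zero] at hsum
      exact squeeze_zero (fun j => dist_nonneg) hb hsum
    have haα : a ∈ cut v α := by
      rw [cut_pos_eq _ hα.1.ne']
      have key : ∀ β : ℝ, 0 < β → β < α → β ≤ v a := by
        intro β hβ0 hβα
        have hcl := (hvG.1.2 β ⟨hβ0.le, hβα.le.trans hα.2⟩).2
        rw [cut_pos_eq _ hβ0.ne'] at hcl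
        have hev : ∀ᶠ j in atTop, (q (M + ψ j)).1 ∈ {y | β ≤ v y} := by
          have htj : Tendsto (fun j => (q (M + ψ j)).2) atTop (𝓝 α) := ht.comp hidxtop
          filter_upwards [htj.eventually (eventually_gt_nhds hβα)] with j hj
          exact hj.le.trans (hqmem (M + ψ j)).2
        exact hcl.mem_of_tendsto hψconv hev
      by_contra hlt
      simp only [mem_setOf_eq, not_le] at hlt
      have h0 : 0 ≤ v a := hvG.1.nonneg a
      have := key ((v a + α)/2) (by linarith) (by linarith)
      linarith
    refine ⟨a, ?_, fun j => φ (M + ψ j),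
      hφ.comp fun i j hij => Nat.add_lt_add_left (hψ hij) M, hxa⟩
    exact mem_iUnion₂.2 ⟨v, hvU, haα⟩
  · intro s hs v hv hconv
    obtain ⟨w, hwU, φ, hφ, hconv2⟩ := h1 s hs
    have hwG := hU w hwU
    have h0 : Hend v w = 0 := by
      have hle : ∀ n, Hend v w ≤ Hend (s (φ n)) v + Hend (s (φ n)) w := by
        intro n
        have htri : hausdorffDist (endo v) (endo w) ≤
            hausdorffDist (endo v) (endo (s (φ n))) +
              hausdorffDist (endo (s (φ n))) (endo w) :=
          hausdorffDist_triangle (endo_edist_ne_top hv.1 (hU _ (hs (φ n))).1)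
        calc Hend v w ≤ hausdorffDist (endo v) (endo (s (φ n))) +
              hausdorffDist (endo (s (φ n))) (endo w) := htri
          _ = Hend (s (φ n)) v + Hend (s (φ n)) w := by
              rw [hausdorffDist_comm]; rfl
      have hlim : Tendsto (fun n => Hend (s (φ n)) v + Hend (s (φ n)) w) atTop (𝓝 (0 + 0)) :=
        (hconv.comp hφ.tendsto_atTop).add hconv2
      rw [add_zero] at hlim
      have hle0 := ge_of_tendsto hlim (Eventually.of_forall hle)
      have hnn : 0 ≤ Hend v w := hausdorffDist_nonneg
      linarith
    have := eq_of_Hend_zero hv.1 hwG.1 h0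
    rw [this]; exact hwU


set_option synthInstance.maxHeartbeats 1000000 in
theorem imp21 {X : Type*} [MetricSpace X] (U : Set (X → ℝ)) (hU : ∀ u ∈ U, FUSCG u)
    (hcpt : ∀ α ∈ Set.Ioc (0:ℝ) 1, IsCompact (closure (⋃ u ∈ U, cut u α)))
    (hclosed : ∀ s : ℕ → X → ℝ, (∀ n, s n ∈ U) → ∀ v : X → ℝ, FUSCG v →
      Tendsto (fun n => Hend (s n) v) atTop (𝓝 0) → v ∈ U) :
    ∀ s : ℕ → X → ℝ, (∀ n, s n ∈ U) →
      ∃ v ∈ U, ∃ φ : ℕ → ℕ, StrictMono φ ∧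
        Tendsto (fun n => Hend (s (φ n)) v) atTop (𝓝 0) := by
  intro s hs
  have hsG : ∀ n, FUSCG (s n) := fun n => hU _ (hs n)
  -- the levels c k = 1/(k+1)
  set c : ℕ → ℝ := fun k => 1/((k:ℝ)+1) with hc
  have hc0 : ∀ k, 0 < c k := fun k => by positivity
  have hc1 : ∀ k, c k ≤ 1 := fun k => by
    rw [hc]; rw [div_le_one (by positivity)]; simp
  have hcsucc : ∀ k, c (k+1) ≤ c k := fun k => by
    rw [hc]
    apply one_div_le_one_div_of_le (by positivity)
    push_cast; linarith
  -- the ambient compact sets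
  set K : ℕ → Set (X × ℝ) := fun k => closure (⋃ u ∈ U, cut u (c k)) ×ˢ Icc (c k) 1 with hK
  have hKcpt : ∀ k, IsCompact (K k) :=
    fun k => (hcpt (c k) ⟨hc0 k, hc1 k⟩).prod isCompact_Icc
  -- the truncated endographs
  set S : ℕ → ℕ → Set (X × ℝ) := fun k n => {p | p ∈ endo (s n) ∧ c k ≤ p.2} with hS
  have hSsub : ∀ k n, S k n ⊆ K k := by
    intro k n p hp
    refine ⟨subset_closure (mem_iUnion₂.2 ⟨s n, hs n, ?_⟩), hp.2, hp.1.1.2⟩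
    rw [cut_pos_eq _ (hc0 k).ne']
    exact (hp.2.trans hp.1.2 : c k ≤ s n p.1)
  have hSclosed : ∀ k n, IsClosed (S k n) :=
    fun k n => (isClosed_endo (hsG n).1).inter (isClosed_le continuous_const continuous_snd)
  have hScpt : ∀ k n, IsCompact (S k n) :=
    fun k n => (hKcpt k).of_isClosed_subset (hSclosed k n) (hSsub k n)
  have hSne : ∀ k n, (S k n).Nonempty := by
    intro k n
    obtain ⟨x, hx⟩ := ((hsG n).1.2 1 ⟨zero_le_one, le_refl 1⟩).1
    rw [cut_pos_eq _ one_ne_zero] at hx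
    exact ⟨(x, 1), ⟨⟨zero_le_one, le_refl 1⟩, hx⟩, hc1 k⟩
  have hSmono : ∀ k n, S k n ⊆ S (k+1) n :=
    fun k n p hp => ⟨hp.1, (hcsucc k).trans hp.2⟩
  -- the hyperspace of nonempty compacts
  haveI hCS : ∀ k, CompactSpace (K k) := fun k => isCompact_iff_compactSpace.mp (hKcpt k)
  set F : ℕ → Π k, TopologicalSpace.NonemptyCompacts (K k) := fun n k =>
    ⟨⟨Subtype.val ⁻¹' (S k n),
      ((hSclosed k n).preimage continuous_subtype_val).isCompact⟩, by
        obtain ⟨p, hp⟩ := hSne k n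
        exact ⟨⟨p, hSsub k n hp⟩, hp⟩⟩ with hF
  haveI hFC : ∀ k, FirstCountableTopology (TopologicalSpace.NonemptyCompacts (K k)) :=
    fun k => inferInstance
  obtain ⟨G, φ, hφ, hGconv⟩ := CompactSpace.tendsto_subseq F
  set T : ℕ → Set (X × ℝ) := fun k => Subtype.val '' ((G k : Set (K k))) with hT
  have hTcpt : ∀ k, IsCompact (T k) := fun k =>
    (G k).isCompact.image continuous_subtype_val
  have hTne : ∀ k, (T k).Nonempty := fun k => (G k).nonempty.image _
  have hTsub : ∀ k, T k ⊆ K k := fun k => Subtype.coe_image_subset _ _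
  -- Hausdorff distance convergence, in the ambient space
  have hHconv : ∀ k, Tendsto (fun n => hausdorffDist (S k (φ n)) (T k)) atTop (𝓝 0) := by
    intro k
    have h1 : Tendsto (fun n => F (φ n) k) atTop (𝓝 (G k)) :=
      (tendsto_pi_nhds.mp hGconv) k
    have h2 := (tendsto_iff_dist_tendsto_zero).1 h1
    have heq : ∀ n, hausdorffDist (S k (φ n)) (T k) = dist (F (φ n) k) (G k) := by
      intro n
      have him : Subtype.val '' ((F (φ n) k : Set (K k))) = S k (φ n) := by
        show Subtype.val '' (Subtype.val ⁻¹' (S k (φ n))) = S k (φ n)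
        rw [Subtype.image_preimage_coe]
        exact inter_eq_self_of_subset_right (hSsub k (φ n))
      calc hausdorffDist (S k (φ n)) (T k)
          = hausdorffDist (Subtype.val '' ((F (φ n) k : Set (K k))))
              (Subtype.val '' ((G k : Set (K k)))) := by rw [him]
        _ = hausdorffDist ((F (φ n) k : Set (K k)) : Set (K k)) ((G k : Set (K k))) :=
            hausdorffDist_image isometry_subtype_coe
        _ = dist (F (φ n) k) (G k) := rfl
    exact h2.congr fun n => (heq n).symm
  -- finiteness of Hausdorff edistances between our compact sets
  have fin : ∀ (A B : Set (X × ℝ)), A.Nonempty → B.Nonempty → IsCompact A → IsCompact B →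
      EMetric.hausdorffEdist A B ≠ ⊤ := fun A B hA hB cA cB =>
    hausdorffEdist_ne_top_of_nonempty_of_bounded hA hB cA.isBounded cB.isBounded
  -- T is monotone
  have hTmono : ∀ k, T k ⊆ T (k+1) := by
    intro k p hp
    apply mem_of_infDist_tendsto_zero (hTcpt (k+1)).isClosed (hTne (k+1))
      (f := fun n => hausdorffDist (S k (φ n)) (T k) +
        hausdorffDist (S (k+1) (φ n)) (T (k+1)))
    · filter_upwards with n
      calc infDist p (T (k+1))
          ≤ infDist p (S (k+1) (φ n)) + hausdorffDist (S (k+1) (φ n)) (T (k+1)) :=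
            infDist_le_infDist_add_hausdorffDist
              (fin _ _ (hSne _ _) (hTne _) (hScpt _ _) (hTcpt _))
        _ ≤ infDist p (S k (φ n)) + hausdorffDist (S (k+1) (φ n)) (T (k+1)) :=
            add_le_add_left (infDist_le_infDist_of_subset (hSmono k (φ n)) (hSne k (φ n))) _
        _ ≤ hausdorffDist (S k (φ n)) (T k) + hausdorffDist (S (k+1) (φ n)) (T (k+1)) := by
            apply add_le_add_left
            rw [hausdorffDist_comm]
            exact infDist_le_hausdorffDist_of_mem hp
              (fin _ _ (hTne _) (hSne _ _) (hTcpt _) (hScpt _ _))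
    · have := (hHconv k).add (hHconv (k+1))
      rwa [add_zero] at this
  have hTmono' : Monotone T := monotone_nat_of_le_succ hTmono
  -- points of any T j with second coordinate above c k belong to T k
  have hTcut : ∀ j k : ℕ, ∀ p : X × ℝ, p ∈ T j → c k < p.2 → p ∈ T k := by
    intro j k p hp hpk
    apply mem_of_infDist_tendsto_zero (hTcpt k).isClosed (hTne k)
      (f := fun n => (hausdorffDist (S j (φ n)) (T j) + 1/((n:ℝ)+1)) +
        hausdorffDist (S k (φ n)) (T k))
    · have hev : ∀ᶠ n in atTop,
          hausdorffDist (S j (φ n)) (T j) + 1/((n:ℝ)+1) < p.2 - c k := by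
        have hlim : Tendsto (fun n : ℕ => hausdorffDist (S j (φ n)) (T j) + 1/((n:ℝ)+1))
            atTop (𝓝 (0+0)) := (hHconv j).add tendsto_one_div_add_atTop_nhds_zero_nat
        rw [add_zero] at hlim
        exact hlim.eventually (eventually_lt_nhds (by linarith))
      filter_upwards [hev] with n hn
      -- pick a nearby point q in S j (φ n)
      have hlt : infDist p (S j (φ n)) < hausdorffDist (S j (φ n)) (T j) + 1/((n:ℝ)+1) := by
        have h1 : infDist p (S j (φ n)) ≤ hausdorffDist (T j) (S j (φ n)) :=
          infDist_le_hausdorffDist_of_mem hp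
            (fin _ _ (hTne _) (hSne _ _) (hTcpt _) (hScpt _ _))
        rw [hausdorffDist_comm] at h1
        have : (0:ℝ) < 1/((n:ℝ)+1) := by positivity
        linarith
      obtain ⟨q, hqS, hqd⟩ := (infDist_lt_iff (hSne j (φ n))).1 hlt
      have hq2 : c k ≤ q.2 := by
        have : dist p.2 q.2 ≤ dist p q := by rw [Prod.dist_eq]; exact le_max_right _ _
        have habs : |p.2 - q.2| ≤ dist p q := by rwa [Real.dist_eq] at this
        have h2 := abs_le.1 habs
        linarith [hqd, hn, h2.1, h2.2]
      have hqSk : q ∈ S k (φ n) := ⟨hqS.1, hq2⟩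
      calc infDist p (T k) ≤ infDist p (S k (φ n)) + hausdorffDist (S k (φ n)) (T k) :=
            infDist_le_infDist_add_hausdorffDist
              (fin _ _ (hSne _ _) (hTne _) (hScpt _ _) (hTcpt _))
        _ ≤ dist p q + hausdorffDist (S k (φ n)) (T k) :=
            add_le_add_left (infDist_le_dist_of_mem hqSk) _
        _ ≤ (hausdorffDist (S j (φ n)) (T j) + 1/((n:ℝ)+1)) + hausdorffDist (S k (φ n)) (T k) :=
            add_le_add_left hqd.le _
    · have := ((hHconv j).add tendsto_one_div_add_atTop_nhds_zero_nat).add (hHconv k)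
      rwa [add_zero, add_zero] at this
  -- the limit fuzzy set
  set E : Set (X × ℝ) := ⋃ k, T k with hE
  set v : X → ℝ := fun x => sSup (insert 0 {t | (x, t) ∈ E}) with hv
  have hslice : ∀ x, insert (0:ℝ) {t | (x, t) ∈ E} ⊆ Icc 0 1 := by
    intro x t ht
    rcases ht with h | h
    · rw [h]; exact ⟨le_refl 0, zero_le_one⟩
    · obtain ⟨k, hk⟩ := mem_iUnion.1 h
      have := (hTsub k hk).2
      exact ⟨(hc0 k).le.trans this.1, this.2⟩
  have hbdd : ∀ x, BddAbove (insert (0:ℝ) {t | (x, t) ∈ E}) :=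
    fun x => ⟨1, fun t ht => (hslice x ht).2⟩
  have hsne : ∀ x, (insert (0:ℝ) {t | (x, t) ∈ E}).Nonempty := fun x => ⟨0, mem_insert _ _⟩
  have hv0 : ∀ x, 0 ≤ v x := fun x => le_csSup (hbdd x) (mem_insert _ _)
  have hv1 : ∀ x, v x ≤ 1 := fun x => csSup_le (hsne x) (fun t ht => (hslice x ht).2)
  have hvget : ∀ p : X × ℝ, p ∈ E → p.2 ≤ v p.1 := by
    intro p hp
    exact le_csSup (hbdd p.1) (mem_insert_of_mem _ (by simpa using hp))
  -- sup attainment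
  have hATT : ∀ x k, c k < v x → (x, v x) ∈ T k := by
    intro x k hk
    have hstep : ∀ m : ℕ, ∃ t : ℝ, (x, t) ∈ T k ∧ v x - 1/((m:ℝ)+1) < t ∧ t ≤ v x := by
      intro m
      have hmax : max (c k) (v x - 1/((m:ℝ)+1)) < v x := by
        apply max_lt hk
        have : (0:ℝ) < 1/((m:ℝ)+1) := by positivity
        linarith
      obtain ⟨t, htmem, htgt⟩ := exists_lt_of_lt_csSup (hsne x) hmax
      have htc : c k < t := lt_of_le_of_lt (le_max_left _ _) htgt
      have htE : (x, t) ∈ E := by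
        rcases htmem with h | h
        · exfalso; rw [h] at htc; exact absurd htc (not_lt.2 (hc0 k).le)
        · exact h
      obtain ⟨j, hj⟩ := mem_iUnion.1 htE
      refine ⟨t, hTcut j k (x, t) hj htc, lt_of_le_of_lt (le_max_right _ _) htgt, ?_⟩
      exact le_csSup (hbdd x) htmem
    choose tm htmT htmlt htmle using hstep
    have htmconv : Tendsto tm atTop (𝓝 (v x)) := by
      have h1 : Tendsto (fun m : ℕ => v x - 1/((m:ℝ)+1)) atTop (𝓝 (v x - 0)) :=
        tendsto_const_nhds.sub tendsto_one_div_add_atTop_nhds_zero_nat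
      rw [sub_zero] at h1
      exact tendsto_of_tendsto_of_tendsto_of_le_of_le h1 tendsto_const_nhds
        (fun m => (htmlt m).le) htmle
    have hconv2 : Tendsto (fun m => ((x, tm m) : X × ℝ)) atTop (𝓝 (x, v x)) :=
      (tendsto_const_nhds (x := x)).prodMk_nhds htmconv
    exact (hTcpt k).isClosed.mem_of_tendsto hconv2 (Eventually.of_forall htmT)
  -- description of the cuts of v
  have hvcut : ∀ α : ℝ, 0 < α → ∀ k, c k < α →
      cut v α = Prod.fst '' (T k ∩ {p | α ≤ p.2}) := by
    intro α hα k hkα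
    rw [cut_pos_eq _ hα.ne']
    ext x
    constructor
    · intro hx
      have hmem : (x, v x) ∈ T k := hATT x k (lt_of_lt_of_le hkα hx)
      exact ⟨(x, v x), ⟨hmem, hx⟩, rfl⟩
    · rintro ⟨p, ⟨hpT, hpα⟩, rfl⟩
      exact hpα.trans (hvget p (mem_iUnion.2 ⟨k, hpT⟩))
  -- a point where v = 1
  have hvone : ∃ y, 1 ≤ v y := by
    obtain ⟨p, hp⟩ := hTne 0
    have h2 := (hTsub 0 hp).2
    have hc00 : c 0 = 1 := by norm_num [hc]
    refine ⟨p.1, ?_⟩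
    have : (1:ℝ) ≤ p.2 := by rw [← hc00]; exact h2.1
    exact this.trans (hvget p (mem_iUnion.2 ⟨0, hp⟩))
  -- v is FUSCG
  have hvcpt : ∀ α ∈ Set.Ioc (0:ℝ) 1, IsCompact (cut v α) := by
    intro α hα
    obtain ⟨k, hk⟩ := exists_nat_one_div_lt hα.1
    have hck : c k < α := hk
    rw [hvcut α hα.1 k hck]
    exact (((hTcpt k).inter_right (isClosed_le continuous_const continuous_snd)).image
      continuous_fst)
  have hvG : FUSCG v := by
    obtain ⟨y, hy⟩ := hvone
    refine ⟨⟨fun x => ⟨hv0 x, hv1 x⟩, ?_⟩, hvcpt⟩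
    intro α hα
    rcases eq_or_ne α 0 with rfl | hα0
    · constructor
      · rw [show cut v 0 = closure {x | 0 < v x} from if_pos rfl]
        exact ⟨y, subset_closure (show (0:ℝ) < v y by linarith)⟩
      · rw [show cut v 0 = closure {x | 0 < v x} from if_pos rfl]
        exact isClosed_closure
    · have hαpos : 0 < α := lt_of_le_of_ne hα.1 (Ne.symm hα0)
      constructor
      · rw [cut_pos_eq _ hα0]
        exact ⟨y, hα.2.trans hy⟩
      · exact (hvcpt α ⟨hαpos, hα.2⟩).isClosed
  -- T k is contained in the endograph of v
  have hTendo : ∀ k, T k ⊆ endo v := by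
    intro k p hp
    have h2 := (hTsub k hp).2
    exact ⟨⟨(hc0 k).le.trans h2.1, h2.2⟩, hvget p (mem_iUnion.2 ⟨k, hp⟩)⟩
  -- the key bound
  have hbound : ∀ k n, Hend (s (φ n)) v ≤ c k + hausdorffDist (S k (φ n)) (T k) := by
    intro k n
    have hHnn : 0 ≤ hausdorffDist (S k (φ n)) (T k) := hausdorffDist_nonneg
    apply hausdorffDist_le_of_infDist (by linarith [(hc0 k)])
    · intro p hp
      rcases le_or_gt p.2 (c k) with h | h
      · have hmem : ((p.1, 0) : X × ℝ) ∈ endo v := endo_mem_zero hv0 p.1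
        calc infDist p (endo v) ≤ dist p (p.1, 0) := infDist_le_dist_of_mem hmem
          _ = max (dist p.1 p.1) (dist p.2 0) := Prod.dist_eq
          _ ≤ c k := by
              rw [dist_self, Real.dist_eq, sub_zero, abs_of_nonneg hp.1.1]
              exact max_le (hc0 k).le h
          _ ≤ c k + hausdorffDist (S k (φ n)) (T k) := by linarith
      · calc infDist p (endo v) ≤ infDist p (T k) :=
              infDist_le_infDist_of_subset (hTendo k) (hTne k)
          _ ≤ hausdorffDist (S k (φ n)) (T k) :=
              infDist_le_hausdorffDist_of_mem ⟨hp, h.le⟩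
                (fin _ _ (hSne _ _) (hTne _) (hScpt _ _) (hTcpt _))
          _ ≤ c k + hausdorffDist (S k (φ n)) (T k) := by linarith [(hc0 k)]
    · intro q hq
      rcases le_or_gt q.2 (c k) with h | h
      · have hmem : ((q.1, 0) : X × ℝ) ∈ endo (s (φ n)) := endo_mem_zero (hsG (φ n)).1.nonneg q.1
        calc infDist q (endo (s (φ n))) ≤ dist q (q.1, 0) := infDist_le_dist_of_mem hmem
          _ = max (dist q.1 q.1) (dist q.2 0) := Prod.dist_eq
          _ ≤ c k := by
              rw [dist_self, Real.dist_eq, sub_zero, abs_of_nonneg hq.1.1]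
              exact max_le (hc0 k).le h
          _ ≤ c k + hausdorffDist (S k (φ n)) (T k) := by linarith
      · have hvq : c k < v q.1 := lt_of_lt_of_le h hq.2
        have hmemT : (q.1, v q.1) ∈ T k := hATT q.1 k hvq
        have hkey : infDist q (endo (s (φ n))) ≤ hausdorffDist (S k (φ n)) (T k) := by
          apply le_of_forall_pos_le_add
          intro δ hδ
          have hlt : infDist ((q.1, v q.1) : X × ℝ) (S k (φ n)) <
              hausdorffDist (S k (φ n)) (T k) + δ := by
            have h1 : infDist ((q.1, v q.1) : X × ℝ) (S k (φ n)) ≤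
                hausdorffDist (T k) (S k (φ n)) :=
              infDist_le_hausdorffDist_of_mem hmemT
                (fin _ _ (hTne _) (hSne _ _) (hTcpt _) (hScpt _ _))
            rw [hausdorffDist_comm] at h1
            linarith
          obtain ⟨r, hrS, hrd⟩ := (infDist_lt_iff (hSne k (φ n))).1 hlt
          have hrendo : ((r.1, min r.2 q.2) : X × ℝ) ∈ endo (s (φ n)) := by
            refine ⟨⟨le_min hrS.1.1.1 hq.1.1, (min_le_left _ _).trans hrS.1.1.2⟩, ?_⟩
            exact (min_le_left _ _).trans hrS.1.2
          have hd1 : dist q.1 r.1 ≤ dist ((q.1, v q.1) : X × ℝ) r := by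
            rw [Prod.dist_eq]; exact le_max_left _ _
          have hd2' : dist (v q.1) r.2 ≤ dist ((q.1, v q.1) : X × ℝ) r := by
            rw [Prod.dist_eq]; exact le_max_right _ _
          have hd2 : dist q.2 (min r.2 q.2) ≤ dist ((q.1, v q.1) : X × ℝ) r := by
            rcases le_total q.2 r.2 with hle | hle
            · rw [min_eq_right hle, dist_self]; exact dist_nonneg
            · rw [min_eq_left hle, Real.dist_eq, abs_of_nonneg (by linarith)]
              have := hd2'
              rw [Real.dist_eq] at this
              have h3 : v q.1 - r.2 ≤ |v q.1 - r.2| := le_abs_self _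
              have hq2 : q.2 ≤ v q.1 := hq.2
              linarith
          calc infDist q (endo (s (φ n))) ≤ dist q ((r.1, min r.2 q.2) : X × ℝ) :=
                infDist_le_dist_of_mem hrendo
            _ = max (dist q.1 r.1) (dist q.2 (min r.2 q.2)) := Prod.dist_eq
            _ ≤ dist ((q.1, v q.1) : X × ℝ) r := max_le hd1 hd2
            _ ≤ hausdorffDist (S k (φ n)) (T k) + δ := hrd.le
        linarith [hkey, (hc0 k).le]
  -- convergence in the endograph metric
  have hHend : Tendsto (fun n => Hend (s (φ n)) v) atTop (𝓝 0) := by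
    rw [Metric.tendsto_atTop]
    intro ε hε
    obtain ⟨k, hk⟩ := exists_nat_one_div_lt (half_pos hε)
    have hck : c k < ε/2 := hk
    have hev : ∀ᶠ n in atTop, hausdorffDist (S k (φ n)) (T k) < ε/2 :=
      (hHconv k).eventually (eventually_lt_nhds (half_pos hε))
    obtain ⟨N, hN⟩ := hev.exists_forall_of_atTop
    refine ⟨N, fun n hn => ?_⟩
    rw [Real.dist_eq, sub_zero, abs_of_nonneg (show (0:ℝ) ≤ Hend (s (φ n)) v from hausdorffDist_nonneg)]
    have := hbound k n
    have h2 := hN n hn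
    calc Hend (s (φ n)) v ≤ c k + hausdorffDist (S k (φ n)) (T k) := this
      _ < ε/2 + ε/2 := by linarith
      _ = ε := by ring
  have hvU : v ∈ U := hclosed (fun n => s (φ n)) (fun n => hs (φ n)) v hvG hHend
  exact ⟨v, hvU, φ, hφ, hHend⟩

theorem compact_FUSCG_tfae
    {X : Type*} [MetricSpace X] (U : Set (X → ℝ)) (hU : ∀ u ∈ U, FUSCG u) :
    List.TFAE
      [ -- (i) U is compact in (F_USCG(X), H_end): every sequence in U has a
        -- subsequence H_end-converging to an element of U
        (∀ s : ℕ → X → ℝ, (∀ n, s n ∈ U) →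
          ∃ v ∈ U, ∃ φ : ℕ → ℕ, StrictMono φ ∧
            Tendsto (fun n => Hend (s (φ n)) v) atTop (𝓝 0)),
        -- (ii) each U(α) is relatively compact and U is closed in (F_USCG(X), H_end)
        ((∀ α ∈ Set.Ioc (0:ℝ) 1, IsCompact (closure (⋃ u ∈ U, cut u α))) ∧
          (∀ s : ℕ → X → ℝ, (∀ n, s n ∈ U) → ∀ v : X → ℝ, FUSCG v →
            Tendsto (fun n => Hend (s n) v) atTop (𝓝 0) → v ∈ U)),
        -- (iii) each U(α) is compact and U is closed in (F_USCG(X), H_end)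
        ((∀ α ∈ Set.Ioc (0:ℝ) 1, IsCompact (⋃ u ∈ U, cut u α)) ∧
          (∀ s : ℕ → X → ℝ, (∀ n, s n ∈ U) → ∀ v : X → ℝ, FUSCG v →
            Tendsto (fun n => Hend (s n) v) atTop (𝓝 0) → v ∈ U)) ] := by
  tfae_have 1 → 3 := fun h => imp13 U hU h
  tfae_have 3 → 2 := by
    rintro ⟨h3a, h3b⟩
    exact ⟨fun α hα => by rw [(h3a α hα).isClosed.closure_eq]; exact h3a α hα, h3b⟩
  tfae_have 2 → 1 := by
    rintro ⟨h2a, h2b⟩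
    exact imp21 U hU h2a h2b
  tfae_finish
end
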